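/- Let F be a field of characteristic zero, let X be an n-element set, let G be a subgroup of the symmetric group Sym(X), and let Y = {y_1,...,y_m} be an m-element set. With W(f) = ∏_{x∈X} w_{f(x)} for f : X → Y, w̃ = (∑_{i=1}^m w_i, ∑_{i=1}^m w_i^2, ..., ∑_{i=1}^m w_i^n), and a_k the number of G-orbits O on Y^X with W(O) = w^{(k)}, one has ∑_{k∈P_m([n])} a_k · w^{(k)} = (1/|G|) · ∑_{σ∈G} Z(σ, w̃) in F[w_1,...,w_m] (the weighted Pólya Enumeration Theorem). -/

import Mathlib

open Finset

open scoped Classical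

noncomputable section

/-- `cycleCount σ i` is the number of cycles of length `i` in the cycle decomposition of the
permutation `σ` (fixed points are counted as cycles of length `1`). -/
def cycleCount {X : Type*} [Fintype X] [DecidableEq X] (σ : Equiv.Perm X) (i : ℕ) : ℕ :=
  if i = 1 then Fintype.card X - σ.support.card else σ.cycleType.count i

/-- `Zmon n σ t = t₁^{c₁(σ)} ⋯ t_n^{c_n(σ)}`, the monomial of the cycle index polynomial
associated to `σ`, evaluated at `t = (t₁, …, t_n)`. -/
def Zmon {X : Type*} [Fintype X] [DecidableEq X] {R : Type*} [CommSemiring R] (n : ℕ)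
    (σ : Equiv.Perm X) (t : Fin n → R) : R :=
  ∏ i : Fin n, t i ^ cycleCount σ (i.1 + 1)

set_option linter.unusedSectionVars false

namespace PolyaPf
variable {F : Type*} [Field F] {m : ℕ} {X : Type*} [Fintype X] [DecidableEq X]
variable {F : Type*} [Field F] {m : ℕ} {X : Type*} [Fintype X] [DecidableEq X]

def wt (F : Type*) [Field F] {m : ℕ} {X : Type*} [Fintype X] (f : X → Fin m) :
    MvPolynomial (Fin m) F := ∏ x, MvPolynomial.X (f x)

lemma wt_comp_perm (f : X → Fin m) (σ : Equiv.Perm X) : wt F (f ∘ σ) = wt F f := by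
  simpa [wt, Function.comp] using Equiv.prod_comp σ (fun x => (MvPolynomial.X (f x) : MvPolynomial (Fin m) F))

def cnt (f : X → Fin m) (i : Fin m) : ℕ := (univ.filter fun x => f x = i).card

def mono (F : Type*) [Field F] {m : ℕ} (k : Fin m → ℕ) : MvPolynomial (Fin m) F :=
  ∏ i, MvPolynomial.X i ^ k i

lemma wt_eq_mono (f : X → Fin m) : wt F f = mono F (cnt f) := by
  rw [wt, mono, ← Finset.prod_fiberwise_of_maps_to (t := univ) (g := f) (fun x _ => mem_univ _)]
  refine Finset.prod_congr rfl fun i _ => ?_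
  rw [Finset.prod_congr rfl (fun x hx => by rw [(mem_filter.1 hx).2]), Finset.prod_const, cnt]

lemma sum_cnt (f : X → Fin m) : ∑ i, cnt f i = Fintype.card X := by
  classical
  rw [← Finset.card_univ, Finset.card_eq_sum_card_fiberwise (f := f) (t := univ) (fun x _ => mem_univ _)]
  rfl

lemma mono_inj {k k' : Fin m → ℕ} (h : mono F k = mono F k') : k = k' := by
  have e : ∀ k : Fin m → ℕ, mono F k =
      MvPolynomial.monomial (Finsupp.equivFunOnFinite.symm k) (1 : F) := by
    intro k
    rw [← MvPolynomial.prod_X_pow_eq_monomial, mono]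
    rw [← Finset.prod_subset (Finset.subset_univ ((Finsupp.equivFunOnFinite.symm k).support))]
    · rfl
    · intro x _ hx
      have : k x = 0 := by simpa using Finsupp.notMem_support_iff.mp hx
      simp [this]
  rw [e, e] at h
  have := (MvPolynomial.monomial_left_inj (one_ne_zero (α := F))).mp h
  exact Finsupp.equivFunOnFinite.symm.injective this

variable {X : Type*} [Fintype X] [DecidableEq X]

def sc (σ : Equiv.Perm X) : Setoid X :=
  ⟨σ.SameCycle, ⟨fun x => Equiv.Perm.SameCycle.refl σ x, fun h => h.symm, fun h h' => h.trans h'⟩⟩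

lemma sc_rel {σ : Equiv.Perm X} {x y : X} : (sc σ).r x y ↔ σ.SameCycle x y := Iff.rfl

def csize (σ : Equiv.Perm X) (q : Quotient (sc σ)) : ℕ :=
  (univ.filter fun x => Quotient.mk (sc σ) x = q).card

lemma fixed_apply_zpow {m : ℕ} {f : X → Fin m} {σ : Equiv.Perm X} (hf : f ∘ σ = f) :
    ∀ (i : ℤ) (x : X), f ((σ ^ i) x) = f x := by
  have h1 : ∀ x, f (σ x) = f x := fun x => congrFun hf x
  intro i
  induction i using Int.induction_on with
  | zero => simp
  | succ k ih =>
      intro x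
      have : (σ ^ ((k : ℤ) + 1)) x = (σ ^ (k : ℤ)) (σ x) := by
        rw [zpow_add_one, Equiv.Perm.mul_apply]
      rw [this, ih, h1]
  | pred k ih =>
      intro x
      have : (σ ^ (-(k : ℤ) - 1)) x = (σ ^ (-(k : ℤ))) (σ⁻¹ x) := by
        rw [zpow_sub_one, Equiv.Perm.mul_apply]
      rw [this, ih]
      conv_rhs => rw [← show σ (σ⁻¹ x) = x from Equiv.apply_symm_apply σ x, h1]

lemma fixed_const {m : ℕ} {f : X → Fin m} {σ : Equiv.Perm X} (hf : f ∘ σ = f) {x y : X}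
    (h : σ.SameCycle x y) : f x = f y := by
  obtain ⟨i, hi⟩ := h
  rw [← hi, fixed_apply_zpow hf]

lemma mk_apply (σ : Equiv.Perm X) (x : X) :
    Quotient.mk (sc σ) (σ x) = Quotient.mk (sc σ) x :=
  Quotient.sound (Equiv.Perm.SameCycle.symm ⟨1, by simp⟩)

lemma class_of_fixed {σ : Equiv.Perm X} {x : X} (hx : σ x = x) :
    (univ.filter fun y => Quotient.mk (sc σ) y = Quotient.mk (sc σ) x) = {x} := by
  ext y
  simp only [mem_filter, mem_univ, true_and, mem_singleton]
  constructor
  · intro h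
    obtain ⟨i, hi⟩ := ((Quotient.exact h : σ.SameCycle y x)).symm
    rw [Equiv.Perm.zpow_apply_eq_self_of_apply_eq_self hx] at hi
    exact hi.symm
  · rintro rfl; rfl


lemma mk_out_eq {σ : Equiv.Perm X} (q : Quotient (sc σ)) :
    Quotient.mk (sc σ) q.out = q := Quotient.out_eq q

lemma csize_eq_card_class {σ : Equiv.Perm X} (q : Quotient (sc σ)) :
    csize σ q = (univ.filter fun y => Quotient.mk (sc σ) y = Quotient.mk (sc σ) q.out).card := by
  rw [csize]; congr 1; ext y; rw [mk_out_eq]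

lemma out_mem_class {σ : Equiv.Perm X} (q : Quotient (sc σ)) :
    q.out ∈ univ.filter fun y => Quotient.mk (sc σ) y = q := by
  simp [mk_out_eq]

lemma csize_pos {σ : Equiv.Perm X} (q : Quotient (sc σ)) : 1 ≤ csize σ q :=
  Finset.card_pos.mpr ⟨q.out, out_mem_class q⟩

lemma csize_le {σ : Equiv.Perm X} (q : Quotient (sc σ)) : csize σ q ≤ Fintype.card X :=
  le_trans (Finset.card_filter_le _ _) (by simp)

lemma class_eq_support_cycleOf {σ : Equiv.Perm X} {x : X} (hx : x ∈ σ.support) :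
    (univ.filter fun y => Quotient.mk (sc σ) y = Quotient.mk (sc σ) x)
      = (σ.cycleOf x).support := by
  ext y
  simp only [mem_filter, mem_univ, true_and, Equiv.Perm.mem_support_cycleOf_iff]
  constructor
  · intro h; exact ⟨(Quotient.exact h : σ.SameCycle y x).symm, hx⟩
  · rintro ⟨h, -⟩; exact Quotient.sound h.symm

lemma csize_one_iff {σ : Equiv.Perm X} (q : Quotient (sc σ)) :
    csize σ q = 1 ↔ σ q.out = q.out := by
  constructor
  · intro h
    rw [csize_eq_card_class] at h
    have h1 := Finset.card_le_one.mp h.le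
    refine h1 _ ?_ _ ?_
    · simp [mk_apply]
    · simp
  · intro h
    rw [csize_eq_card_class, class_of_fixed h, Finset.card_singleton]

lemma count_classes_one (σ : Equiv.Perm X) :
    (univ.filter fun q : Quotient (sc σ) => csize σ q = 1).card
      = Fintype.card X - σ.support.card := by
  have key : (univ.filter fun q : Quotient (sc σ) => csize σ q = 1).card
      = (univ.filter fun x : X => σ x = x).card := by
    refine Finset.card_bij' (fun q _ => q.out) (fun x _ => Quotient.mk (sc σ) x) ?_ ?_ ?_ ?_
    · intro q hq
      simp only [mem_filter, mem_univ, true_and] at hq ⊢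
      exact (csize_one_iff q).mp hq
    · intro x hx
      simp only [mem_filter, mem_univ, true_and] at hx ⊢
      rw [csize, class_of_fixed hx, Finset.card_singleton]
    · intro q _; exact mk_out_eq q
    · intro x hx
      simp only [mem_filter, mem_univ, true_and] at hx
      have : (Quotient.mk (sc σ) x).out ∈
          (univ.filter fun y => Quotient.mk (sc σ) y = Quotient.mk (sc σ) x) := by
        simp only [mem_filter, mem_univ, true_and]
        exact Quotient.out_eq _
      rw [class_of_fixed hx] at this
      exact Finset.mem_singleton.mp this
  rw [key]
  have := Finset.card_filter_add_card_filter_not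
    (s := (univ : Finset X)) (p := fun x => σ x = x)
  have hs : (univ.filter fun x : X => ¬ σ x = x).card = σ.support.card := by
    congr 1
  simp only [card_univ] at this
  omega

lemma out_mem_support {σ : Equiv.Perm X} {q : Quotient (sc σ)} {ℓ : ℕ} (hℓ : ℓ ≠ 1)
    (h : csize σ q = ℓ) : q.out ∈ σ.support := by
  by_contra hn
  have : σ q.out = q.out := by simpa [Equiv.Perm.mem_support] using hn
  exact hℓ (h ▸ (csize_one_iff q).mpr this)

lemma count_classes_ne_one (σ : Equiv.Perm X) {ℓ : ℕ} (hℓ1 : 1 ≤ ℓ) (hℓ : ℓ ≠ 1) :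
    (univ.filter fun q : Quotient (sc σ) => csize σ q = ℓ).card
      = σ.cycleType.count ℓ := by
  have : σ.cycleType.count ℓ
      = (σ.cycleFactorsFinset.filter fun c => c.support.card = ℓ).card := by
    rw [Equiv.Perm.cycleType_def, Multiset.count_map]
    simp only [Finset.card, Finset.filter_val, Function.comp]
    congr 1
    exact Multiset.filter_congr fun c _ => by constructor <;> exact Eq.symm
  rw [this]
  refine Finset.card_bij (fun q _ => σ.cycleOf q.out) ?_ ?_ ?_
  · intro q hq
    simp only [mem_filter, mem_univ, true_and] at hq ⊢
    have hout := out_mem_support hℓ hq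
    refine ⟨Equiv.Perm.cycleOf_mem_cycleFactorsFinset_iff.mpr hout, ?_⟩
    rw [← class_eq_support_cycleOf hout, ← csize_eq_card_class, hq]
  · intro q1 h1 q2 h2 heq
    simp only [mem_filter, mem_univ, true_and] at h1 h2
    have hout2 := out_mem_support hℓ h2
    have heq' : σ.cycleOf q1.out = σ.cycleOf q2.out := heq
    have : q2.out ∈ (σ.cycleOf q1.out).support := by
      rw [heq']
      exact Equiv.Perm.mem_support_cycleOf_iff.mpr ⟨Equiv.Perm.SameCycle.refl σ _, hout2⟩
    have hsc : σ.SameCycle q1.out q2.out := (Equiv.Perm.mem_support_cycleOf_iff.mp this).1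
    rw [← mk_out_eq q1, ← mk_out_eq q2]
    exact Quotient.sound hsc
  · intro c hc
    simp only [mem_filter, mem_univ, true_and] at hc
    obtain ⟨hmem, hcard⟩ := hc
    have hne : c.support.Nonempty := Finset.card_pos.mp (hcard ▸ hℓ1)
    obtain ⟨x, hx⟩ := hne
    have hceq : c = σ.cycleOf x := Equiv.Perm.cycle_is_cycleOf hx hmem
    have hxs : x ∈ (σ.cycleOf x).support := hceq ▸ hx
    have hxsupp : x ∈ σ.support := (Equiv.Perm.mem_support_cycleOf_iff.mp hxs).2
    refine ⟨Quotient.mk (sc σ) x, ?_, ?_⟩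
    · simp only [mem_filter, mem_univ, true_and]
      rw [csize]
      have : (univ.filter fun y => Quotient.mk (sc σ) y = Quotient.mk (sc σ) x)
          = (σ.cycleOf x).support := class_eq_support_cycleOf hxsupp
      rw [this, ← hceq, hcard]
    · have hsc : σ.SameCycle (Quotient.mk (sc σ) x).out x :=
        sc_rel.mp (Quotient.exact (Quotient.out_eq _))
      show σ.cycleOf (Quotient.mk (sc σ) x).out = c
      rw [hsc.cycleOf_eq, ← hceq]


lemma count_classes (σ : Equiv.Perm X) {ℓ : ℕ} (hℓ : 1 ≤ ℓ) :
    (univ.filter fun q : Quotient (sc σ) => csize σ q = ℓ).card = cycleCount σ ℓ := by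
  rcases eq_or_ne ℓ 1 with rfl | hne
  · rw [cycleCount, if_pos rfl, count_classes_one]
  · rw [cycleCount, if_neg hne, count_classes_ne_one σ hℓ hne]

lemma sum_fixed (F : Type*) [Field F] (m n : ℕ) (σ : Equiv.Perm X)
    (hX : Fintype.card X = n) :
    ∑ f ∈ univ.filter (fun f : X → Fin m => f ∘ σ = f), wt F f
      = Zmon n σ
          (fun j => ∑ i : Fin m, (MvPolynomial.X i : MvPolynomial (Fin m) F) ^ (j.1 + 1)) := by
  have stepA : ∑ f ∈ univ.filter (fun f : X → Fin m => f ∘ σ = f), wt F f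
      = ∑ g : Quotient (sc σ) → Fin m, wt F (g ∘ Quotient.mk (sc σ)) := by
    refine (Finset.sum_nbij' (fun g => g ∘ Quotient.mk (sc σ)) (fun f q => f q.out)
      ?_ ?_ ?_ ?_ ?_).symm
    · intro g _
      simp only [mem_filter, mem_univ, true_and]
      funext x
      show g (Quotient.mk (sc σ) (σ x)) = g (Quotient.mk (sc σ) x)
      rw [mk_apply]
    · intro f _; exact mem_univ _
    · intro g _
      funext q
      show g (Quotient.mk (sc σ) q.out) = g q
      rw [mk_out_eq]
    · intro f hf
      simp only [mem_filter, mem_univ, true_and] at hf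
      funext x
      exact fixed_const hf (sc_rel.mp (Quotient.exact (Quotient.out_eq _)))
    · intro g _; rfl
  have stepB : ∀ g : Quotient (sc σ) → Fin m,
      wt F (g ∘ Quotient.mk (sc σ))
        = ∏ q : Quotient (sc σ), (MvPolynomial.X (g q) : MvPolynomial (Fin m) F) ^ csize σ q := by
    intro g
    calc wt F (g ∘ Quotient.mk (sc σ))
        = ∏ x : X, (fun q => (MvPolynomial.X (g q) : MvPolynomial (Fin m) F))
            (Quotient.mk (sc σ) x) := rfl
      _ = ∏ q : Quotient (sc σ), ∏ _x ∈ univ.filter fun x => Quotient.mk (sc σ) x = q,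
            (MvPolynomial.X (g q) : MvPolynomial (Fin m) F) :=
          (Finset.prod_fiberwise_of_maps_to' (g := Quotient.mk (sc σ))
            (t := (univ : Finset (Quotient (sc σ)))) (fun x _ => mem_univ _)
            (fun q => (MvPolynomial.X (g q) : MvPolynomial (Fin m) F))).symm
      _ = ∏ q : Quotient (sc σ), (MvPolynomial.X (g q) : MvPolynomial (Fin m) F) ^ csize σ q :=
          Finset.prod_congr rfl fun q _ => by rw [Finset.prod_const]; rfl
  have stepC : ∑ g : Quotient (sc σ) → Fin m,
        ∏ q : Quotient (sc σ), (MvPolynomial.X (g q) : MvPolynomial (Fin m) F) ^ csize σ q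
      = ∏ q : Quotient (sc σ),
          ∑ i : Fin m, (MvPolynomial.X i : MvPolynomial (Fin m) F) ^ csize σ q := by
    rw [Finset.prod_univ_sum (fun _ => (univ : Finset (Fin m)))
      (fun q i => (MvPolynomial.X i : MvPolynomial (Fin m) F) ^ csize σ q),
      Fintype.piFinset_univ]
  rw [stepA, Finset.sum_congr rfl (fun g _ => stepB g), stepC]
  -- step D
  have hφlt : ∀ q : Quotient (sc σ), csize σ q - 1 < n := fun q => by
    have := csize_pos q; have := csize_le q; omega
  set φ : Quotient (sc σ) → Fin n := fun q => ⟨csize σ q - 1, hφlt q⟩ with hφ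
  have hsz : ∀ q, csize σ q = (φ q).1 + 1 := fun q => by
    have := csize_pos q; simp only [hφ]; omega
  calc ∏ q : Quotient (sc σ), ∑ i : Fin m, (MvPolynomial.X i : MvPolynomial (Fin m) F) ^ csize σ q
      = ∏ q : Quotient (sc σ),
          (fun j : Fin n => ∑ i : Fin m,
            (MvPolynomial.X i : MvPolynomial (Fin m) F) ^ (j.1 + 1)) (φ q) := by
        refine Finset.prod_congr rfl fun q _ => ?_
        show (∑ i : Fin m, (MvPolynomial.X i : MvPolynomial (Fin m) F) ^ csize σ q)
          = ∑ i : Fin m, (MvPolynomial.X i : MvPolynomial (Fin m) F) ^ ((φ q).1 + 1)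
        rw [← hsz q]
    _ = ∏ j ∈ (univ : Finset (Fin n)), ∏ _q ∈ univ.filter fun q => φ q = j,
          ∑ i : Fin m, (MvPolynomial.X i : MvPolynomial (Fin m) F) ^ (j.1 + 1) :=
        (Finset.prod_fiberwise_of_maps_to' (g := φ) (t := (univ : Finset (Fin n)))
          (fun q _ => mem_univ _)
          (fun j => ∑ i : Fin m, (MvPolynomial.X i : MvPolynomial (Fin m) F) ^ (j.1 + 1))).symm
    _ = Zmon n σ (fun j => ∑ i : Fin m,
          (MvPolynomial.X i : MvPolynomial (Fin m) F) ^ (j.1 + 1)) := by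
        rw [Zmon]
        refine Finset.prod_congr rfl fun j _ => ?_
        rw [Finset.prod_const]
        congr 1
        rw [← count_classes σ (Nat.le_add_left 1 j.1)]
        congr 1
        ext q
        simp only [mem_filter, mem_univ, true_and]
        constructor
        · rintro rfl
          exact hsz q
        · intro h
          apply Fin.ext
          simp only [hφ]
          omega

section Orbits
variable (G : Subgroup (Equiv.Perm X))

def orb (G : Subgroup (Equiv.Perm X)) (m : ℕ) (f : X → Fin m) : Finset (X → Fin m) :=
  univ.filter fun g => ∃ σ : G, g = f ∘ (σ : Equiv.Perm X)

lemma mem_orb_iff {f g : X → Fin m} : g ∈ orb G m f ↔ ∃ σ : G, g = f ∘ (σ : Equiv.Perm X) := by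
  simp [orb]

lemma mem_orb_self (f : X → Fin m) : f ∈ orb G m f :=
  (mem_orb_iff G).mpr ⟨1, by simp⟩

lemma comp_mul (f : X → Fin m) (σ τ : G) :
    f ∘ ((σ * τ : G) : Equiv.Perm X) = (f ∘ (σ : Equiv.Perm X)) ∘ (τ : Equiv.Perm X) := rfl

lemma orb_eq {f g : X → Fin m} (h : g ∈ orb G m f) : orb G m g = orb G m f := by
  obtain ⟨σ, rfl⟩ := (mem_orb_iff G).mp h
  ext h'
  rw [mem_orb_iff, mem_orb_iff]
  constructor
  · rintro ⟨τ, rfl⟩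
    exact ⟨σ * τ, by rw [comp_mul]⟩
  · rintro ⟨ρ, rfl⟩
    refine ⟨σ⁻¹ * ρ, ?_⟩
    rw [← comp_mul, ← mul_assoc, mul_inv_cancel, one_mul]

lemma wt_eq_of_mem_orb {f g : X → Fin m} (h : g ∈ orb G m f) : wt F g = wt F f := by
  obtain ⟨σ, rfl⟩ := (mem_orb_iff G).mp h
  exact wt_comp_perm f _

def stabCard (G : Subgroup (Equiv.Perm X)) {m : ℕ} (f : X → Fin m) : ℕ :=
  (univ.filter fun σ : G => f ∘ (σ : Equiv.Perm X) = f).card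

lemma sum_stabCard (f : X → Fin m) : ∑ g ∈ orb G m f, stabCard G g = Fintype.card G := by
  rw [← Finset.card_univ,
    Finset.card_eq_sum_card_fiberwise (f := fun σ : G => f ∘ (σ : Equiv.Perm X))
      (t := orb G m f) (fun σ _ => (mem_orb_iff G).mpr ⟨σ, rfl⟩)]
  refine (Finset.sum_congr rfl fun g hg => ?_).symm
  obtain ⟨σ0, rfl⟩ := (mem_orb_iff G).mp hg
  rw [stabCard]
  refine Finset.card_nbij' (fun σ => σ0⁻¹ * σ) (fun τ => σ0 * τ) ?_ ?_ ?_ ?_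
  · intro σ hσ
    simp only [mem_coe, mem_filter, mem_univ, true_and] at hσ ⊢
    have e := comp_mul G f σ0 (σ0⁻¹ * σ)
    rw [mul_inv_cancel_left] at e
    rw [← e]
    exact hσ
  · intro τ hτ
    simp only [mem_coe, mem_filter, mem_univ, true_and] at hτ ⊢
    rw [comp_mul]
    exact hτ
  · intro σ _; show σ0 * (σ0⁻¹ * σ) = σ; rw [mul_inv_cancel_left]
  · intro τ _; show σ0⁻¹ * (σ0 * τ) = τ; rw [inv_mul_cancel_left]


def wtO (F : Type*) [Field F] {m : ℕ} {X : Type*} [Fintype X] (O : Finset (X → Fin m)) :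
    MvPolynomial (Fin m) F :=
  if h : O.Nonempty then wt F h.choose else 0

lemma wtO_eq {O : Finset (X → Fin m)}
    (hO : O ∈ (univ : Finset (X → Fin m)).image (orb G m)) {g : X → Fin m} (hg : g ∈ O) :
    wtO F O = wt F g := by
  obtain ⟨f, -, rfl⟩ := Finset.mem_image.mp hO
  have hne : (orb G m f).Nonempty := ⟨f, mem_orb_self G f⟩
  rw [wtO, dif_pos hne, wt_eq_of_mem_orb G hne.choose_spec, wt_eq_of_mem_orb G hg]

lemma burnside :
    ∑ σ : G, ∑ f ∈ univ.filter (fun f : X → Fin m => f ∘ (σ : Equiv.Perm X) = f), wt F f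
      = (Fintype.card G) •
          ∑ O ∈ (univ : Finset (X → Fin m)).image (orb G m), wtO F O := by
  calc ∑ σ : G, ∑ f ∈ univ.filter (fun f : X → Fin m => f ∘ (σ : Equiv.Perm X) = f), wt F f
      = ∑ σ : G, ∑ f : X → Fin m,
          if f ∘ (σ : Equiv.Perm X) = f then wt F f else 0 :=
        Finset.sum_congr rfl fun σ _ => Finset.sum_filter _ _
    _ = ∑ f : X → Fin m, ∑ σ : G,
          if f ∘ (σ : Equiv.Perm X) = f then wt F f else 0 := Finset.sum_comm
    _ = ∑ f : X → Fin m, stabCard G f • wt F f := by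
        refine Finset.sum_congr rfl fun f _ => ?_
        rw [← Finset.sum_filter, Finset.sum_const, stabCard]
    _ = ∑ O ∈ (univ : Finset (X → Fin m)).image (orb G m),
          ∑ f ∈ univ.filter fun f => orb G m f = O, stabCard G f • wt F f :=
        (Finset.sum_fiberwise_of_maps_to
          (fun f _ => Finset.mem_image_of_mem _ (mem_univ f)) _).symm
    _ = ∑ O ∈ (univ : Finset (X → Fin m)).image (orb G m), (Fintype.card G) • wtO F O := by
        refine Finset.sum_congr rfl fun O hO => ?_
        obtain ⟨f0, -, rfl⟩ := Finset.mem_image.mp hO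
        have hfil : (univ.filter fun f : X → Fin m => orb G m f = orb G m f0) = orb G m f0 := by
          ext f
          simp only [mem_filter, mem_univ, true_and]
          exact ⟨fun h => h ▸ mem_orb_self G f, fun h => orb_eq G h⟩
        rw [hfil]
        have hwt : ∀ f ∈ orb G m f0, stabCard G f • wt F f
            = stabCard G f • wtO F (orb G m f0) := fun f hf => by
          rw [wtO_eq G hO hf]
        rw [Finset.sum_congr rfl hwt, ← Finset.sum_smul, sum_stabCard]
    _ = (Fintype.card G) •
          ∑ O ∈ (univ : Finset (X → Fin m)).image (orb G m), wtO F O :=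
        (Finset.smul_sum).symm

lemma lhs_eq {n : ℕ} (hX : Fintype.card X = n) :
    ∑ k ∈ Finset.Nat.antidiagonalTuple m n,
        (((((univ : Finset (X → Fin m)).image (orb G m)).filter
            fun O : Finset (X → Fin m) => ∃ f ∈ O, wt F f = mono F k).card :
              MvPolynomial (Fin m) F)) * mono F k
      = ∑ O ∈ (univ : Finset (X → Fin m)).image (orb G m), wtO F O := by
  calc ∑ k ∈ Finset.Nat.antidiagonalTuple m n,
        (((((univ : Finset (X → Fin m)).image (orb G m)).filter
            fun O => ∃ f ∈ O, wt F f = mono F k).card : MvPolynomial (Fin m) F)) * mono F k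
      = ∑ k ∈ Finset.Nat.antidiagonalTuple m n,
          ∑ O ∈ ((univ : Finset (X → Fin m)).image (orb G m)).filter
            (fun O => ∃ f ∈ O, wt F f = mono F k), mono F k := by
        refine Finset.sum_congr rfl fun k _ => ?_
        rw [Finset.sum_const, nsmul_eq_mul]
    _ = ∑ k ∈ Finset.Nat.antidiagonalTuple m n,
          ∑ O ∈ (univ : Finset (X → Fin m)).image (orb G m),
            if ∃ f ∈ O, wt F f = mono F k then mono F k else 0 :=
        Finset.sum_congr rfl fun k _ => Finset.sum_filter _ _
    _ = ∑ O ∈ (univ : Finset (X → Fin m)).image (orb G m),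
          ∑ k ∈ Finset.Nat.antidiagonalTuple m n,
            if ∃ f ∈ O, wt F f = mono F k then mono F k else 0 := Finset.sum_comm
    _ = ∑ O ∈ (univ : Finset (X → Fin m)).image (orb G m), wtO F O := by
        refine Finset.sum_congr rfl fun O hO => ?_
        obtain ⟨f0, -, hOf0⟩ := Finset.mem_image.mp hO
        subst hOf0
        have hP : ∀ k : Fin m → ℕ,
            (∃ f ∈ orb G m f0, wt F f = mono F k) ↔ k = cnt f0 := by
          intro k
          constructor
          · rintro ⟨f, hf, hwf⟩
            rw [wt_eq_of_mem_orb G hf, wt_eq_mono] at hwf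
            exact (mono_inj hwf).symm
          · rintro rfl
            exact ⟨f0, mem_orb_self G f0, wt_eq_mono f0⟩
        calc ∑ k ∈ Finset.Nat.antidiagonalTuple m n,
              (if ∃ f ∈ orb G m f0, wt F f = mono F k then mono F k else 0)
            = ∑ k ∈ Finset.Nat.antidiagonalTuple m n,
              (if k = cnt f0 then mono F k else 0) := by
              refine Finset.sum_congr rfl fun k _ => ?_
              simp only [hP k]
          _ = mono F (cnt f0) := by
              rw [Finset.sum_ite_eq' (Finset.Nat.antidiagonalTuple m n) (cnt f0) (mono F),
                if_pos]
              rw [Finset.Nat.mem_antidiagonalTuple, sum_cnt, hX]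
          _ = wtO F (orb G m f0) := by
              rw [wtO_eq G hO (mem_orb_self G f0), wt_eq_mono]

end Orbits
end PolyaPf


/-- **Weighted Pólya Enumeration Theorem.** With `a_k` the number of `G`-orbits `O` on `Y^X`
(where `σ` sends `f` to `x ↦ f(x^σ)`) whose weight is `w^{(k)}`, one has
`∑_{k ∈ P_m([n])} a_k · w^{(k)} = (1/|G|) ∑_{σ ∈ G} Z(σ, w̃)` in `F[w₁, …, w_m]`.
Orbits are encoded as the finsets `{f ∘ σ : σ ∈ G}` for `f : X → Fin m`, and the weight of an
orbit is `W(f)` for any member `f` of the orbit. -/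
theorem weighted_polya {F : Type*} [Field F] [CharZero F] (n m : ℕ)
    (X : Type*) [Fintype X] [DecidableEq X] (hX : Fintype.card X = n)
    (G : Subgroup (Equiv.Perm X)) :
    ∑ k ∈ Finset.Nat.antidiagonalTuple m n,
      (((univ.image fun f : X → Fin m =>
              univ.filter fun g : X → Fin m => ∃ σ : G, g = f ∘ (σ : Equiv.Perm X)).filter
            fun O : Finset (X → Fin m) => ∃ f ∈ O,
              (∏ x, (MvPolynomial.X (f x) : MvPolynomial (Fin m) F)) =
                ∏ i, MvPolynomial.X i ^ k i).card : MvPolynomial (Fin m) F)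
        * ∏ i, MvPolynomial.X i ^ k i
      = MvPolynomial.C ((Fintype.card G : F)⁻¹) *
          ∑ σ : G,
            Zmon n (σ : Equiv.Perm X)
              (fun j => ∑ i : Fin m, (MvPolynomial.X i : MvPolynomial (Fin m) F) ^ (j.1 + 1)) := by

  show ∑ k ∈ Finset.Nat.antidiagonalTuple m n,
      (((((univ : Finset (X → Fin m)).image (PolyaPf.orb G m)).filter
          fun O : Finset (X → Fin m) =>
            ∃ f ∈ O, PolyaPf.wt F f = PolyaPf.mono F k).card : MvPolynomial (Fin m) F))
        * PolyaPf.mono F k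
    = MvPolynomial.C ((Fintype.card G : F)⁻¹) *
        ∑ σ : G,
          Zmon n (σ : Equiv.Perm X)
            (fun j => ∑ i : Fin m, (MvPolynomial.X i : MvPolynomial (Fin m) F) ^ (j.1 + 1))
  rw [PolyaPf.lhs_eq G hX]
  have h1 : ∑ σ : G, Zmon n (σ : Equiv.Perm X)
        (fun j => ∑ i : Fin m, (MvPolynomial.X i : MvPolynomial (Fin m) F) ^ (j.1 + 1))
      = ∑ σ : G, ∑ f ∈ univ.filter (fun f : X → Fin m => f ∘ (σ : Equiv.Perm X) = f),
          PolyaPf.wt F f :=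
    Finset.sum_congr rfl fun σ _ => (PolyaPf.sum_fixed F m n (σ : Equiv.Perm X) hX).symm
  rw [h1, PolyaPf.burnside G, nsmul_eq_mul,
    ← map_natCast (MvPolynomial.C : F →+* MvPolynomial (Fin m) F) (Fintype.card G),
    ← mul_assoc, ← map_mul, inv_mul_cancel₀ (Nat.cast_ne_zero.mpr Fintype.card_ne_zero),
    map_one, one_mul]
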